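/- Fix m ∈ ℕ. For every relation-type term τ over m variables there exist k ∈ ℕ and a finite set S ⊆ F_k^m of normal forms of degree k such that in every Boolean algebra with operators of relation type, under every valuation of the variables x_0,…,x_{m−1}, the value of τ equals the join of the values of the elements of S. -/

import Mathlib

/-- Relation-type terms over `m` variables. -/
inductive RTerm (m : ℕ) : Type
  | var : Fin m → RTerm m
  | zero : RTerm m
  | one : RTerm m
  | id : RTerm m
  | add : RTerm m → RTerm m → RTerm m
  | mul : RTerm m → RTerm m → RTerm m
  | neg : RTerm m → RTerm m
  | comp : RTerm m → RTerm m → RTerm m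
  | conv : RTerm m → RTerm m
  deriving DecidableEq

/-- The diversity term `0′ = 1 · −1′`. -/
def RTerm.div {m : ℕ} : RTerm m := .mul .one (.neg .id)

/-- The list `D_m = {1′, x_0, …, x_{m−1}}`. -/
def listD (m : ℕ) : List (RTerm m) :=
  RTerm.id :: List.ofFn (fun i : Fin m => RTerm.var i)

/-- Signed product `Y^α`, where the sign of `x ∈ Y` is positive iff `x ∈ S`
(the empty product is `1`). -/
def sprodBy {m : ℕ} (Y S : List (RTerm m)) : RTerm m :=
  (Y.map (fun x => if x ∈ S then x else RTerm.neg x)).foldr RTerm.mul RTerm.one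

/-- The one-step closure `CY = {x;y : x,y ∈ Y} ∪ {x˘ : x ∈ Y}`. -/
def listC {m : ℕ} (Y : List (RTerm m)) : List (RTerm m) :=
  (Y.flatMap fun x => Y.map fun y => RTerm.comp x y) ++ Y.map RTerm.conv

/-- The normal forms `F_n^m`: `F_0^m = {D_m^β}`,
`F_{n+1}^m = {D_m^β · (C F_n^m)^α}`. -/
def forms (m : ℕ) : ℕ → List (RTerm m)
  | 0 => (listD m).sublists.map (sprodBy (listD m))
  | n + 1 =>
      (listD m).sublists.flatMap fun S =>
        (listC (forms m n)).sublists.map fun T =>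
          RTerm.mul (sprodBy (listD m) S) (sprodBy (listC (forms m n)) T)

/-- A Boolean algebra with operators of relation type: a Boolean algebra with a
distinguished identity element, a binary composition and a unary converse that
are normal and additive in each argument. -/
structure RelBAO (B : Type*) [BooleanAlgebra B] where
  rid : B
  comp : B → B → B
  conv : B → B
  comp_bot_left : ∀ x, comp ⊥ x = ⊥
  comp_bot_right : ∀ x, comp x ⊥ = ⊥
  comp_sup_left : ∀ x y z, comp (x ⊔ y) z = comp x z ⊔ comp y z
  comp_sup_right : ∀ x y z, comp x (y ⊔ z) = comp x y ⊔ comp x z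
  conv_bot : conv ⊥ = ⊥
  conv_sup : ∀ x y, conv (x ⊔ y) = conv x ⊔ conv y

/-- Evaluation of a relation-type term in a Boolean algebra with operators. -/
def beval {B : Type*} [BooleanAlgebra B] (A : RelBAO B) {m : ℕ} (v : Fin m → B) :
    RTerm m → B
  | .var i => v i
  | .zero => ⊥
  | .one => ⊤
  | .id => A.rid
  | .add a b => beval A v a ⊔ beval A v b
  | .mul a b => beval A v a ⊓ beval A v b
  | .neg a => (beval A v a)ᶜ
  | .comp a b => A.comp (beval A v a) (beval A v b)
  | .conv a => A.conv (beval A v a)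

/-- Relativized interpretation of relation-type terms inside a unit `W ⊆ U × U`. -/
def rint {U : Type*} (W : Set (U × U)) {m : ℕ} (v : Fin m → Set (U × U)) :
    RTerm m → Set (U × U)
  | .var i => v i
  | .zero => ∅
  | .one => W
  | .id => {p | p ∈ W ∧ p.1 = p.2}
  | .add a b => rint W v a ∪ rint W v b
  | .mul a b => rint W v a ∩ rint W v b
  | .neg a => W \ rint W v a
  | .comp a b => {p | p ∈ W ∧ ∃ c, (p.1, c) ∈ rint W v a ∧ (c, p.2) ∈ rint W v b}
  | .conv a => {p | p ∈ W ∧ (p.2, p.1) ∈ rint W v a}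

/-- The two relation properties `R` (reflexive) and `S` (symmetric). -/
inductive RS | R | S
  deriving DecidableEq

/-- `W` is an `H`-relation: reflexive on its base if `R ∈ H`,
symmetric if `S ∈ H`. -/
def IsHRel (H : Set RS) {U : Type*} (W : Set (U × U)) : Prop :=
  (RS.R ∈ H → ∀ a b : U, (a, b) ∈ W → (a, a) ∈ W ∧ (b, b) ∈ W) ∧
  (RS.S ∈ H → ∀ a b : U, (a, b) ∈ W → (b, a) ∈ W)

/-- The equation `τ = σ` is `RRA_H`-valid. -/
def Valid (H : Set RS) {m : ℕ} (τ σ : RTerm m) : Prop :=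
  ∀ (U : Type) (W : Set (U × U)) (v : Fin m → Set (U × U)),
    IsHRel H W → (∀ i, v i ⊆ W) → rint W v τ = rint W v σ

/-- `[σ]` is an atom of the free algebra `Fr_m(RRA_H)`. -/
def IsAtomT (H : Set RS) {m : ℕ} (σ : RTerm m) : Prop :=
  ¬ Valid H σ .zero ∧
    ∀ ρ : RTerm m, Valid H (σ.mul ρ) .zero ∨ Valid H (σ.mul (.neg ρ)) .zero

/-- `e1 = 1′·−(0′;0′)`. -/
def termE1 {m : ℕ} : RTerm m := .mul .id (.neg (.comp .div .div))
/-- `e2 = 1′·(0′;0′)`. -/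
def termE2 {m : ℕ} : RTerm m := .mul .id (.comp .div .div)
/-- `m2 = 0′·−(0′;0′)`. -/
def termM2 {m : ℕ} : RTerm m := .mul .div (.neg (.comp .div .div))
/-- `m3 = 0′·(0′;0′)`. -/
def termM3 {m : ℕ} : RTerm m := .mul .div (.comp .div .div)
/-- `t = 0′·0′˘·((0′·0′˘);(0′·0′˘))`. -/
def termT {m : ℕ} : RTerm m :=
  .mul (.mul .div (.conv .div)) (.comp (.mul .div (.conv .div)) (.mul .div (.conv .div)))

section NF3
open List

variable {m : ℕ} {B : Type*} [BooleanAlgebra B]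

/-- join of a list of values -/
def lsup {α : Type*} {B : Type*} [BooleanAlgebra B] (f : α → B) : List α → B
  | [] => ⊥
  | a :: l => f a ⊔ lsup f l

@[simp] lemma lsup_nil {α : Type*} (f : α → B) : lsup f [] = ⊥ := rfl
@[simp] lemma lsup_cons {α : Type*} (f : α → B) (a : α) (l : List α) :
    lsup f (a :: l) = f a ⊔ lsup f l := rfl

lemma lsup_congr {α : Type*} {f g : α → B} {l : List α} (h : ∀ a ∈ l, f a = g a) :
    lsup f l = lsup g l := by
  induction l with
  | nil => rfl
  | cons a l ih =>
      simp only [lsup_cons, h a (by simp), ih (fun x hx => h x (by simp [hx]))]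

lemma lsup_append {α : Type*} (f : α → B) (l₁ l₂ : List α) :
    lsup f (l₁ ++ l₂) = lsup f l₁ ⊔ lsup f l₂ := by
  induction l₁ with
  | nil => simp
  | cons a l ih => simp [ih, sup_assoc]

lemma lsup_map {α γ : Type*} (f : α → B) (g : γ → α) (l : List γ) :
    lsup f (l.map g) = lsup (fun x => f (g x)) l := by
  induction l with
  | nil => rfl
  | cons a l ih => simp [ih]

lemma lsup_flatMap {α γ : Type*} (f : α → B) (g : γ → List α) (l : List γ) :
    lsup f (l.flatMap g) = lsup (fun x => lsup f (g x)) l := by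
  induction l with
  | nil => rfl
  | cons a l ih => simp [List.flatMap_cons, lsup_append, ih]

lemma inf_lsup {α : Type*} (b : B) (f : α → B) (l : List α) :
    b ⊓ lsup f l = lsup (fun a => b ⊓ f a) l := by
  induction l with
  | nil => simp
  | cons a l ih => simp [inf_sup_left, ih]

lemma lsup_le {α : Type*} {f : α → B} {l : List α} {c : B} (h : ∀ a ∈ l, f a ≤ c) :
    lsup f l ≤ c := by
  induction l with
  | nil => simp
  | cons a l ih => exact sup_le (h a (by simp)) (ih fun x hx => h x (by simp [hx]))

lemma le_lsup {α : Type*} {f : α → B} {l : List α} {a : α} (h : a ∈ l) :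
    f a ≤ lsup f l := by
  induction l with
  | nil => simp at h
  | cons x l ih =>
      rcases List.mem_cons.mp h with h | h
      · subst h; exact le_sup_left
      · exact le_trans (ih h) le_sup_right

lemma lsup_ite_filter {α : Type*} (f : α → B) (p : α → Bool) (l : List α) :
    lsup (fun a => if p a then f a else ⊥) l = lsup f (l.filter p) := by
  induction l with
  | nil => rfl
  | cons a l ih =>
      cases h : p a <;> simp [List.filter_cons, h, ih]

lemma toFinset_sup_eq {α : Type*} [DecidableEq α] (f : α → B) (l : List α) :
    l.toFinset.sup f = lsup f l := by
  induction l with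
  | nil => simp
  | cons a l ih => simp [List.toFinset_cons, ih]

lemma lsup_select {α : Type*} (c : B) (f : α → B) (L : List α) (p : α → Bool)
    (h : ∀ a ∈ L, c ⊓ f a = if p a then f a else ⊥) :
    c ⊓ lsup f L = lsup f (L.filter p) := by
  rw [inf_lsup, lsup_congr h, lsup_ite_filter]

/-! ### signed products -/

lemma sprodBy_cons (y : RTerm m) (Y S : List (RTerm m)) :
    sprodBy (y :: Y) S = RTerm.mul (if y ∈ S then y else RTerm.neg y) (sprodBy Y S) := rfl

lemma sprodBy_congr {Y S T : List (RTerm m)} (h : ∀ x ∈ Y, x ∈ S ↔ x ∈ T) :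
    sprodBy Y S = sprodBy Y T := by
  induction Y with
  | nil => rfl
  | cons a Y ih =>
      rw [sprodBy_cons, sprodBy_cons, ih (fun x hx => h x (List.mem_cons_of_mem _ hx))]
      congr 1
      exact if_congr (h a List.mem_cons_self) rfl rfl

lemma beval_mul (A : RelBAO B) (v : Fin m → B) (a b : RTerm m) :
    beval A v (RTerm.mul a b) = beval A v a ⊓ beval A v b := rfl

lemma beval_sprod (A : RelBAO B) (v : Fin m → B) (Y S : List (RTerm m)) :
    beval A v (sprodBy Y S) =
      Y.toFinset.inf (fun y => if y ∈ S then beval A v y else (beval A v y)ᶜ) := by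
  induction Y with
  | nil => simp [sprodBy, beval]
  | cons a Y ih =>
      rw [sprodBy_cons, beval_mul, ih, List.toFinset_cons, Finset.inf_insert]
      congr 1
      by_cases h : a ∈ S <;> simp [h, beval]

lemma sprod_le_lit (A : RelBAO B) (v : Fin m → B) {Y S : List (RTerm m)} {y : RTerm m}
    (hy : y ∈ Y) :
    beval A v (sprodBy Y S) ≤ if y ∈ S then beval A v y else (beval A v y)ᶜ := by
  rw [beval_sprod]
  exact Finset.inf_le (List.mem_toFinset.mpr hy)

lemma beval_sprod_dedup (A : RelBAO B) (v : Fin m → B) (Y S : List (RTerm m)) :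
    beval A v (sprodBy Y.dedup S) = beval A v (sprodBy Y S) := by
  rw [beval_sprod, beval_sprod]
  have : Y.dedup.toFinset = Y.toFinset := by
    ext x; simp [List.mem_toFinset, List.mem_dedup]
  rw [this]

/-! ### cover -/

lemma cover_nodup (A : RelBAO B) (v : Fin m → B) :
    ∀ Y : List (RTerm m), Y.Nodup →
      (⊤ : B) ≤ lsup (fun S => beval A v (sprodBy Y S)) Y.sublists := by
  intro Y
  induction Y with
  | nil =>
      intro _
      simp [List.sublists_nil, sprodBy, beval]
  | cons a Y ih =>
      intro hnd
      have ha : a ∉ Y := (List.nodup_cons.mp hnd).1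
      have h2 := ih (List.nodup_cons.mp hnd).2
      have hs : (a :: Y).sublists = Y.sublists.flatMap fun x => [x, a :: x] := by
        rw [List.sublists_cons]; rfl
      rw [hs, lsup_flatMap]
      refine le_trans h2 (lsup_le fun S hS => ?_)
      have hSY : S <+ Y := List.mem_sublists.mp hS
      have haS : a ∉ S := fun h => ha (hSY.subset h)
      have e1 : beval A v (sprodBy (a :: Y) S)
          = (beval A v a)ᶜ ⊓ beval A v (sprodBy Y S) := by
        rw [sprodBy_cons, beval_mul, if_neg haS]; rfl
      have e2 : beval A v (sprodBy (a :: Y) (a :: S))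
          = beval A v a ⊓ beval A v (sprodBy Y S) := by
        rw [sprodBy_cons, beval_mul, if_pos (show a ∈ a :: S from List.mem_cons_self)]
        have hcg : sprodBy Y (a :: S) = sprodBy Y S := by
          refine sprodBy_congr fun x hx => ?_
          constructor
          · intro hxS
            rcases List.mem_cons.mp hxS with h | h
            · exact absurd (h ▸ hx) ha
            · exact h
          · exact fun h => List.mem_cons_of_mem _ h
        rw [hcg]
      have key : lsup (fun T => beval A v (sprodBy (a :: Y) T)) [S, a :: S]
          = beval A v (sprodBy Y S) := by
        simp only [lsup_cons, lsup_nil, sup_bot_eq, e1, e2]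
        rw [← inf_sup_right, compl_sup_eq_top, top_inf_eq]
      exact le_trans (le_of_eq key.symm)
        (le_lsup (f := fun x => lsup (fun T => beval A v (sprodBy (a :: Y) T)) [x, a :: x]) hS)

lemma cover (A : RelBAO B) (v : Fin m → B) (Y : List (RTerm m)) :
    lsup (fun S => beval A v (sprodBy Y S)) Y.sublists = ⊤ := by
  refine le_antisymm le_top ?_
  refine le_trans (cover_nodup A v Y.dedup (List.nodup_dedup Y)) ?_
  refine lsup_le fun S hS => ?_
  rw [beval_sprod_dedup A v Y S]
  exact le_lsup (f := fun S => beval A v (sprodBy Y S))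
    (List.mem_sublists.mpr ((List.mem_sublists.mp hS).trans (List.dedup_sublist Y)))

end NF3

section NF3b
open List

variable {m : ℕ} {B : Type*} [BooleanAlgebra B]

/-- Boolean evaluation of a term relative to a sign assignment on atoms. -/
def hB {m : ℕ} (p : RTerm m → Bool) : RTerm m → Bool
  | .zero => false
  | .one => true
  | .add a b => hB p a || hB p b
  | .mul a b => hB p a && hB p b
  | .neg a => !hB p a
  | t => p t

/-- `ρ` is a Boolean combination of atoms from `Y`. -/
def isBC {m : ℕ} (Y : List (RTerm m)) : RTerm m → Prop
  | .zero => True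
  | .one => True
  | .add a b => isBC Y a ∧ isBC Y b
  | .mul a b => isBC Y a ∧ isBC Y b
  | .neg a => isBC Y a
  | t => t ∈ Y

lemma isBC_mono {Y Y' : List (RTerm m)} (h : ∀ x ∈ Y, x ∈ Y') :
    ∀ ρ, isBC Y ρ → isBC Y' ρ := by
  intro ρ
  induction ρ with
  | add a b iha ihb => intro hh; exact ⟨iha hh.1, ihb hh.2⟩
  | mul a b iha ihb => intro hh; exact ⟨iha hh.1, ihb hh.2⟩
  | neg a iha => exact iha
  | zero => intro _; trivial
  | one => intro _; trivial
  | var i => exact h _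
  | id => exact h _
  | comp a b _ _ => exact h _
  | conv a _ => exact h _

lemma litBound (A : RelBAO B) (v : Fin m → B) (Y : List (RTerm m))
    (p : RTerm m → Bool) (b : B)
    (h : ∀ y ∈ Y, b ≤ if p y then beval A v y else (beval A v y)ᶜ) :
    ∀ ρ, isBC Y ρ → b ≤ if hB p ρ then beval A v ρ else (beval A v ρ)ᶜ := by
  intro ρ
  induction ρ with
  | var i => intro hm; exact h _ hm
  | id => intro hm; exact h _ hm
  | comp a c _ _ => intro hm; exact h _ hm
  | conv a _ => intro hm; exact h _ hm
  | zero => intro _; simp [hB, beval]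
  | one => intro _; simp [hB, beval]
  | add a c iha ihc =>
      intro hm
      have h1 := iha hm.1
      have h2 := ihc hm.2
      show b ≤ if hB p a || hB p c then beval A v a ⊔ beval A v c
          else (beval A v a ⊔ beval A v c)ᶜ
      cases e1 : hB p a <;> cases e2 : hB p c <;>
        simp only [e1, e2, Bool.false_or, Bool.true_or, Bool.or_self,
          if_true, if_false] at h1 h2 ⊢ <;>
        first
          | exact le_sup_of_le_left h1
          | exact le_sup_of_le_right h2
          | (rw [compl_sup]; exact le_inf h1 h2)
  | mul a c iha ihc =>
      intro hm
      have h1 := iha hm.1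
      have h2 := ihc hm.2
      show b ≤ if hB p a && hB p c then beval A v a ⊓ beval A v c
          else (beval A v a ⊓ beval A v c)ᶜ
      cases e1 : hB p a <;> cases e2 : hB p c <;>
        simp only [e1, e2, Bool.false_and, Bool.true_and, Bool.and_self,
          if_true, if_false] at h1 h2 ⊢ <;>
        first
          | exact le_inf h1 h2
          | (rw [compl_inf]; exact le_sup_of_le_left h1)
          | (rw [compl_inf]; exact le_sup_of_le_right h2)
  | neg a iha =>
      intro hm
      have h1 := iha hm
      show b ≤ if !hB p a then (beval A v a)ᶜ else ((beval A v a)ᶜ)ᶜ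
      cases e1 : hB p a <;>
        simp only [e1, Bool.not_false, Bool.not_true, if_true, if_false,
          compl_compl] at h1 ⊢ <;> exact h1

/-- generators at level `k` -/
def gen (m : ℕ) : ℕ → List (RTerm m)
  | 0 => listD m
  | k + 1 => listD m ++ listC (forms m k)

lemma mem_listD_cases {x : RTerm m} (h : x ∈ listD m) :
    x = RTerm.id ∨ ∃ i, x = RTerm.var i := by
  rcases List.mem_cons.mp h with h | h
  · exact Or.inl h
  · right
    rcases List.mem_ofFn.mp h with ⟨i, hi⟩
    exact ⟨i, hi.symm⟩

lemma mem_listC_cases {Y : List (RTerm m)} {x : RTerm m} (h : x ∈ listC Y) :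
    (∃ a ∈ Y, ∃ b ∈ Y, x = RTerm.comp a b) ∨ (∃ a ∈ Y, x = RTerm.conv a) := by
  rcases List.mem_append.mp h with h | h
  · left
    rcases List.mem_flatMap.mp h with ⟨a, ha, hx⟩
    rcases List.mem_map.mp hx with ⟨b, hb, hx⟩
    exact ⟨a, ha, b, hb, hx.symm⟩
  · right
    rcases List.mem_map.mp h with ⟨a, ha, hx⟩
    exact ⟨a, ha, hx.symm⟩

lemma listD_listC_disj {Y : List (RTerm m)} {x : RTerm m}
    (h1 : x ∈ listD m) (h2 : x ∈ listC Y) : False := by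
  rcases mem_listD_cases h1 with h | ⟨i, h⟩ <;>
    rcases mem_listC_cases h2 with ⟨a, _, b, _, he⟩ | ⟨a, _, he⟩ <;>
    subst h <;> simp at he

lemma mem_listC_of_comp {F : List (RTerm m)} {a b : RTerm m}
    (ha : a ∈ F) (hb : b ∈ F) : RTerm.comp a b ∈ listC F :=
  List.mem_append.mpr (Or.inl (List.mem_flatMap.mpr ⟨a, ha, List.mem_map.mpr ⟨b, hb, rfl⟩⟩))

lemma mem_listC_of_conv {F : List (RTerm m)} {a : RTerm m} (ha : a ∈ F) :
    RTerm.conv a ∈ listC F :=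
  List.mem_append.mpr (Or.inr (List.mem_map.mpr ⟨a, ha, rfl⟩))

/-- term-level finite join -/
def tsup {m : ℕ} : List (RTerm m) → RTerm m
  | [] => RTerm.zero
  | a :: l => RTerm.add a (tsup l)

lemma beval_tsup (A : RelBAO B) (v : Fin m → B) (L : List (RTerm m)) :
    beval A v (tsup L) = lsup (beval A v) L := by
  induction L with
  | nil => rfl
  | cons a l ih => show _ ⊔ _ = _ ⊔ _; rw [ih]

lemma isBC_tsup {Y L : List (RTerm m)} (h : ∀ x ∈ L, isBC Y x) : isBC Y (tsup L) := by
  induction L with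
  | nil => trivial
  | cons a l ih =>
      exact ⟨h a (by simp), ih fun x hx => h x (by simp [hx])⟩

lemma comp_lsup_left {α : Type*} (A : RelBAO B) (f : α → B) (L : List α) (y : B) :
    A.comp (lsup f L) y = lsup (fun a => A.comp (f a) y) L := by
  induction L with
  | nil => simp [A.comp_bot_left]
  | cons a l ih => simp [A.comp_sup_left, ih]

lemma comp_lsup_right {α : Type*} (A : RelBAO B) (f : α → B) (L : List α) (x : B) :
    A.comp x (lsup f L) = lsup (fun a => A.comp x (f a)) L := by
  induction L with
  | nil => simp [A.comp_bot_right]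
  | cons a l ih => simp [A.comp_sup_right, ih]

lemma conv_lsup {α : Type*} (A : RelBAO B) (f : α → B) (L : List α) :
    A.conv (lsup f L) = lsup (fun a => A.conv (f a)) L := by
  induction L with
  | nil => simp [A.conv_bot]
  | cons a l ih => simp [A.conv_sup, ih]

lemma beval_comp_tsup (A : RelBAO B) (v : Fin m → B) (L₁ L₂ : List (RTerm m)) :
    beval A v (tsup (L₁.flatMap fun a => L₂.map (RTerm.comp a)))
      = A.comp (lsup (beval A v) L₁) (lsup (beval A v) L₂) := by
  rw [beval_tsup, lsup_flatMap, comp_lsup_left]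
  refine lsup_congr fun a _ => ?_
  rw [lsup_map, comp_lsup_right]
  exact lsup_congr fun b _ => rfl

lemma beval_conv_tsup (A : RelBAO B) (v : Fin m → B) (L : List (RTerm m)) :
    beval A v (tsup (L.map RTerm.conv)) = A.conv (lsup (beval A v) L) := by
  rw [beval_tsup, lsup_map, conv_lsup]
  exact lsup_congr fun b _ => rfl

end NF3b

section NF3c
open List

variable {m : ℕ} {B : Type*} [BooleanAlgebra B]

lemma keyCut (A : RelBAO B) (v : Fin m → B) {Y : List (RTerm m)} {ρ : RTerm m}
    (hρ : isBC Y ρ) (p : RTerm m → Bool) (b : B)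
    (h : ∀ y ∈ Y, b ≤ if p y then beval A v y else (beval A v y)ᶜ) :
    beval A v ρ ⊓ b = if hB p ρ then b else ⊥ := by
  have hb := litBound A v Y p b h ρ hρ
  cases e : hB p ρ
  · rw [e] at hb
    simp only [Bool.false_eq_true, if_false] at hb ⊢
    exact le_bot_iff.mp ((inf_le_inf_left _ hb).trans (le_of_eq inf_compl_eq_bot))
  · rw [e] at hb
    simp only [if_true] at hb ⊢
    exact inf_eq_right.mpr hb

lemma isBC_sprod {Y Z S : List (RTerm m)} (h : ∀ x ∈ Z, isBC Y x) :
    isBC Y (sprodBy Z S) := by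
  induction Z with
  | nil => trivial
  | cons a Z ih =>
      rw [sprodBy_cons]
      refine ⟨?_, ih fun x hx => h x (List.mem_cons_of_mem _ hx)⟩
      by_cases hs : a ∈ S
      · rw [if_pos hs]; exact h a (by simp)
      · rw [if_neg hs]; exact h a (by simp)

lemma isBC_of_memD {Y : List (RTerm m)} (hsub : ∀ z ∈ listD m, z ∈ Y) :
    ∀ x ∈ listD m, isBC Y x := by
  intro x hx
  rcases mem_listD_cases hx with h | ⟨i, h⟩ <;> subst h <;> exact hsub _ hx

lemma isBC_of_memC {F Y : List (RTerm m)} (hsub : ∀ z ∈ listC F, z ∈ Y) :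
    ∀ x ∈ listC F, isBC Y x := by
  intro x hx
  rcases mem_listC_cases hx with ⟨a, _, b, _, h⟩ | ⟨a, _, h⟩ <;> subst h <;> exact hsub _ hx

lemma forms_isBC : ∀ (k : ℕ), ∀ σ ∈ forms m k, isBC (gen m k) σ := by
  intro k
  cases k with
  | zero =>
      intro σ hσ
      simp only [forms] at hσ
      rcases List.mem_map.mp hσ with ⟨S, _, rfl⟩
      exact isBC_sprod (isBC_of_memD fun z hz => hz)
  | succ k =>
      intro σ hσ
      simp only [forms] at hσ
      rcases List.mem_flatMap.mp hσ with ⟨S, hS, hσ⟩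
      rcases List.mem_map.mp hσ with ⟨T, hT, rfl⟩
      exact ⟨isBC_sprod (isBC_of_memD fun z hz => List.mem_append.mpr (Or.inl hz)),
             isBC_sprod (isBC_of_memC fun z hz => List.mem_append.mpr (Or.inr hz))⟩

lemma finalLemma : ∀ (k : ℕ) (ρ : RTerm m), isBC (gen m k) ρ →
    ∃ L : List (RTerm m), (∀ σ ∈ L, σ ∈ forms m k) ∧
      ∀ (B : Type) [BooleanAlgebra B] (A : RelBAO B) (v : Fin m → B),
        beval A v ρ = lsup (beval A v) L := by
  intro k
  cases k with
  | zero =>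
      intro ρ h
      refine ⟨((listD m).sublists.filter fun S => hB (fun y => decide (y ∈ S)) ρ).map
          (sprodBy (listD m)), ?_, ?_⟩
      · intro σ hσ
        rcases List.mem_map.mp hσ with ⟨S, hS, rfl⟩
        simp only [forms]
        exact List.mem_map.mpr ⟨S, List.mem_of_mem_filter hS, rfl⟩
      · intro B _ A v
        have hsel : ∀ S ∈ (listD m).sublists,
            beval A v ρ ⊓ beval A v (sprodBy (listD m) S)
              = if hB (fun y => decide (y ∈ S)) ρ
                then beval A v (sprodBy (listD m) S) else ⊥ := by
          intro S _
          refine keyCut A v h _ _ fun y hy => ?_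
          have h2 := sprod_le_lit A v (Y := listD m) (S := S) hy
          simpa [decide_eq_true_eq] using h2
        calc beval A v ρ = beval A v ρ ⊓ ⊤ := by simp
          _ = beval A v ρ ⊓ lsup (fun S => beval A v (sprodBy (listD m) S))
                (listD m).sublists := by rw [cover]
          _ = lsup (fun S => beval A v (sprodBy (listD m) S))
                ((listD m).sublists.filter fun S => hB (fun y => decide (y ∈ S)) ρ) :=
              lsup_select _ _ _ _ hsel
          _ = _ := (lsup_map _ _ _).symm
  | succ k =>
      intro ρ h
      refine ⟨(listD m).sublists.flatMap fun S =>
          (((listC (forms m k)).sublists.filter fun T =>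
              hB (fun y => decide (y ∈ S ++ T)) ρ).map
            fun T => RTerm.mul (sprodBy (listD m) S) (sprodBy (listC (forms m k)) T)),
          ?_, ?_⟩
      · intro σ hσ
        rcases List.mem_flatMap.mp hσ with ⟨S, hS, hσ⟩
        rcases List.mem_map.mp hσ with ⟨T, hT, rfl⟩
        simp only [forms]
        exact List.mem_flatMap.mpr ⟨S, hS,
          List.mem_map.mpr ⟨T, List.mem_of_mem_filter hT, rfl⟩⟩
      · intro B _ A v
        have inner : ∀ S ∈ (listD m).sublists,
            beval A v ρ ⊓ beval A v (sprodBy (listD m) S)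
              = lsup (beval A v)
                  (((listC (forms m k)).sublists.filter fun T =>
                      hB (fun y => decide (y ∈ S ++ T)) ρ).map
                    fun T => RTerm.mul (sprodBy (listD m) S)
                      (sprodBy (listC (forms m k)) T)) := by
          intro S hS
          have hSD : ∀ x ∈ S, x ∈ listD m := (List.mem_sublists.mp hS).subset
          have key : ∀ T ∈ (listC (forms m k)).sublists,
              beval A v ρ ⊓ beval A v (RTerm.mul (sprodBy (listD m) S)
                  (sprodBy (listC (forms m k)) T))
                = if hB (fun y => decide (y ∈ S ++ T)) ρ
                  then beval A v (RTerm.mul (sprodBy (listD m) S)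
                    (sprodBy (listC (forms m k)) T))
                  else ⊥ := by
            intro T hT
            have hTC : ∀ x ∈ T, x ∈ listC (forms m k) := (List.mem_sublists.mp hT).subset
            refine keyCut A v h _ _ fun y hy => ?_
            rw [beval_mul]
            rcases List.mem_append.mp hy with hyD | hyC
            · have hyT : y ∉ T := fun hyT => listD_listC_disj hyD (hTC _ hyT)
              have h2 := le_trans (inf_le_left (b := beval A v (sprodBy (listC (forms m k)) T))) (sprod_le_lit A v (S := S) hyD)
              simpa [decide_eq_true_eq, List.mem_append, hyT] using h2
            · have hyS : y ∉ S := fun hyS => listD_listC_disj (hSD _ hyS) hyC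
              have h2 := le_trans (inf_le_right (a := beval A v (sprodBy (listD m) S))) (sprod_le_lit A v (S := T) hyC)
              simpa [decide_eq_true_eq, List.mem_append, hyS] using h2
          calc beval A v ρ ⊓ beval A v (sprodBy (listD m) S)
              = beval A v ρ ⊓ (beval A v (sprodBy (listD m) S) ⊓ ⊤) := by simp
            _ = beval A v ρ ⊓ (beval A v (sprodBy (listD m) S)
                  ⊓ lsup (fun T => beval A v (sprodBy (listC (forms m k)) T))
                      (listC (forms m k)).sublists) := by rw [cover]
            _ = beval A v ρ ⊓ lsup (fun T => beval A v (RTerm.mul (sprodBy (listD m) S)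
                  (sprodBy (listC (forms m k)) T))) (listC (forms m k)).sublists := by
                rw [inf_lsup (beval A v (sprodBy (listD m) S))]
                exact congrArg (fun z => beval A v ρ ⊓ z)
                  (lsup_congr fun T _ => (beval_mul A v _ _).symm)
            _ = lsup (fun T => beval A v (RTerm.mul (sprodBy (listD m) S)
                  (sprodBy (listC (forms m k)) T)))
                  ((listC (forms m k)).sublists.filter fun T =>
                    hB (fun y => decide (y ∈ S ++ T)) ρ) :=
                lsup_select _ _ _ _ key
            _ = _ := (lsup_map _ _ _).symm
        calc beval A v ρ = beval A v ρ ⊓ ⊤ := by simp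
          _ = beval A v ρ ⊓ lsup (fun S => beval A v (sprodBy (listD m) S))
                (listD m).sublists := by rw [cover]
          _ = lsup (fun S => beval A v ρ ⊓ beval A v (sprodBy (listD m) S))
                (listD m).sublists := inf_lsup _ _ _
          _ = lsup (fun S => lsup (beval A v)
                (((listC (forms m k)).sublists.filter fun T =>
                    hB (fun y => decide (y ∈ S ++ T)) ρ).map
                  fun T => RTerm.mul (sprodBy (listD m) S)
                    (sprodBy (listC (forms m k)) T)))
                (listD m).sublists := lsup_congr inner
          _ = _ := (lsup_flatMap _ _ _).symm

lemma var_mem_listD (i : Fin m) : RTerm.var i ∈ listD m :=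
  List.mem_cons_of_mem _ (List.mem_ofFn.mpr ⟨i, rfl⟩)

lemma id_mem_listD : RTerm.id ∈ listD (m := m) :=
  List.mem_cons_self

lemma bcLift : ∀ (k : ℕ) (ρ : RTerm m), isBC (gen m k) ρ →
    ∃ ρ', isBC (gen m (k + 1)) ρ' ∧
      ∀ (B : Type) [BooleanAlgebra B] (A : RelBAO B) (v : Fin m → B),
        beval A v ρ = beval A v ρ' := by
  intro k
  induction k with
  | zero =>
      intro ρ h
      exact ⟨ρ, isBC_mono (fun x hx => List.mem_append.mpr (Or.inl hx)) ρ h,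
        fun _ _ _ _ => rfl⟩
  | succ k ihk =>
      have refine_k : ∀ σ ∈ forms m k, ∃ L : List (RTerm m),
          (∀ τ ∈ L, τ ∈ forms m (k + 1)) ∧
          ∀ (B : Type) [BooleanAlgebra B] (A : RelBAO B) (v : Fin m → B),
            beval A v σ = lsup (beval A v) L := by
        intro σ hσ
        obtain ⟨ρ', hρ', he⟩ := ihk σ (forms_isBC k σ hσ)
        obtain ⟨L, hL, he2⟩ := finalLemma (k + 1) ρ' hρ'
        exact ⟨L, hL, fun B _ A v => (he B A v).trans (he2 B A v)⟩
      intro ρ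
      induction ρ with
      | zero => intro _; exact ⟨.zero, trivial, fun _ _ _ _ => rfl⟩
      | one => intro _; exact ⟨.one, trivial, fun _ _ _ _ => rfl⟩
      | var i =>
          intro _
          refine ⟨.var i, ?_, fun _ _ _ _ => rfl⟩
          show RTerm.var i ∈ _
          exact List.mem_append.mpr (Or.inl (var_mem_listD i))
      | id =>
          intro _
          refine ⟨.id, ?_, fun _ _ _ _ => rfl⟩
          show RTerm.id ∈ _
          exact List.mem_append.mpr (Or.inl id_mem_listD)
      | add a b iha ihb =>
          intro hm
          obtain ⟨a', ha', hea⟩ := iha hm.1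
          obtain ⟨b', hb', heb⟩ := ihb hm.2
          refine ⟨.add a' b', ⟨ha', hb'⟩, fun B _ A v => ?_⟩
          show beval A v a ⊔ beval A v b = beval A v a' ⊔ beval A v b'
          rw [hea B A v, heb B A v]
      | mul a b iha ihb =>
          intro hm
          obtain ⟨a', ha', hea⟩ := iha hm.1
          obtain ⟨b', hb', heb⟩ := ihb hm.2
          refine ⟨.mul a' b', ⟨ha', hb'⟩, fun B _ A v => ?_⟩
          show beval A v a ⊓ beval A v b = beval A v a' ⊓ beval A v b'
          rw [hea B A v, heb B A v]
      | neg a iha =>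
          intro hm
          obtain ⟨a', ha', hea⟩ := iha hm
          refine ⟨.neg a', ha', fun B _ A v => ?_⟩
          show (beval A v a)ᶜ = (beval A v a')ᶜ
          rw [hea B A v]
      | comp a b iha ihb =>
          intro hm
          have hm' : RTerm.comp a b ∈ listC (forms m k) := by
            rcases List.mem_append.mp hm with h | h
            · exfalso
              rcases mem_listD_cases h with h2 | ⟨i, h2⟩ <;> simp at h2
            · exact h
          have hab : a ∈ forms m k ∧ b ∈ forms m k := by
            rcases mem_listC_cases hm' with ⟨x, hx, y, hy, he⟩ | ⟨x, hx, he⟩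
            · obtain ⟨h1, h2⟩ := RTerm.comp.inj he
              exact ⟨h1 ▸ hx, h2 ▸ hy⟩
            · simp at he
          obtain ⟨L₁, hL1, he1⟩ := refine_k a hab.1
          obtain ⟨L₂, hL2, he2⟩ := refine_k b hab.2
          refine ⟨tsup (L₁.flatMap fun s => L₂.map (RTerm.comp s)), ?_, ?_⟩
          · refine isBC_tsup fun t ht => ?_
            rcases List.mem_flatMap.mp ht with ⟨s, hs, ht⟩
            rcases List.mem_map.mp ht with ⟨u, hu, rfl⟩
            show RTerm.comp s u ∈ _
            exact List.mem_append.mpr (Or.inr (mem_listC_of_comp (hL1 s hs) (hL2 u hu)))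
          · intro B _ A v
            rw [beval_comp_tsup]
            show A.comp (beval A v a) (beval A v b) = _
            rw [he1 B A v, he2 B A v]
      | conv a iha =>
          intro hm
          have hm' : RTerm.conv a ∈ listC (forms m k) := by
            rcases List.mem_append.mp hm with h | h
            · exfalso
              rcases mem_listD_cases h with h2 | ⟨i, h2⟩ <;> simp at h2
            · exact h
          have hax : a ∈ forms m k := by
            rcases mem_listC_cases hm' with ⟨x, hx, y, hy, he⟩ | ⟨x, hx, he⟩
            · simp at he
            · obtain h1 := RTerm.conv.inj he
              exact h1 ▸ hx
          obtain ⟨L, hL, he1⟩ := refine_k a hax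
          refine ⟨tsup (L.map RTerm.conv), ?_, ?_⟩
          · refine isBC_tsup fun t ht => ?_
            rcases List.mem_map.mp ht with ⟨s, hs, rfl⟩
            show RTerm.conv s ∈ _
            exact List.mem_append.mpr (Or.inr (mem_listC_of_conv (hL s hs)))
          · intro B _ A v
            rw [beval_conv_tsup]
            show A.conv (beval A v a) = _
            rw [he1 B A v]

lemma bcLiftLe {k k' : ℕ} (hkk : k ≤ k') : ∀ (ρ : RTerm m), isBC (gen m k) ρ →
    ∃ ρ', isBC (gen m k') ρ' ∧
      ∀ (B : Type) [BooleanAlgebra B] (A : RelBAO B) (v : Fin m → B),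
        beval A v ρ = beval A v ρ' := by
  induction hkk with
  | refl => exact fun ρ h => ⟨ρ, h, fun _ _ _ _ => rfl⟩
  | @step k'' _ ih =>
      intro ρ hρ
      obtain ⟨ρ', h1, h2⟩ := ih ρ hρ
      obtain ⟨ρ'', h3, h4⟩ := bcLift k'' ρ' h1
      exact ⟨ρ'', h3, fun B _ A v => (h2 B A v).trans (h4 B A v)⟩

lemma mainBC : ∀ τ : RTerm m, ∃ (k : ℕ) (ρ : RTerm m), isBC (gen m k) ρ ∧
    ∀ (B : Type) [BooleanAlgebra B] (A : RelBAO B) (v : Fin m → B),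
      beval A v τ = beval A v ρ := by
  intro τ
  induction τ with
  | zero => exact ⟨0, .zero, trivial, fun _ _ _ _ => rfl⟩
  | one => exact ⟨0, .one, trivial, fun _ _ _ _ => rfl⟩
  | var i => exact ⟨0, .var i, var_mem_listD i, fun _ _ _ _ => rfl⟩
  | id => exact ⟨0, .id, id_mem_listD, fun _ _ _ _ => rfl⟩
  | add a b iha ihb =>
      obtain ⟨k₁, ρ₁, h1, e1⟩ := iha
      obtain ⟨k₂, ρ₂, h2, e2⟩ := ihb
      obtain ⟨ρ₁', h1', e1'⟩ := bcLiftLe (le_max_left k₁ k₂) ρ₁ h1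
      obtain ⟨ρ₂', h2', e2'⟩ := bcLiftLe (le_max_right k₁ k₂) ρ₂ h2
      refine ⟨max k₁ k₂, .add ρ₁' ρ₂', ⟨h1', h2'⟩, fun B _ A v => ?_⟩
      show beval A v a ⊔ beval A v b = beval A v ρ₁' ⊔ beval A v ρ₂'
      rw [e1 B A v, e2 B A v, e1' B A v, e2' B A v]
  | mul a b iha ihb =>
      obtain ⟨k₁, ρ₁, h1, e1⟩ := iha
      obtain ⟨k₂, ρ₂, h2, e2⟩ := ihb
      obtain ⟨ρ₁', h1', e1'⟩ := bcLiftLe (le_max_left k₁ k₂) ρ₁ h1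
      obtain ⟨ρ₂', h2', e2'⟩ := bcLiftLe (le_max_right k₁ k₂) ρ₂ h2
      refine ⟨max k₁ k₂, .mul ρ₁' ρ₂', ⟨h1', h2'⟩, fun B _ A v => ?_⟩
      show beval A v a ⊓ beval A v b = beval A v ρ₁' ⊓ beval A v ρ₂'
      rw [e1 B A v, e2 B A v, e1' B A v, e2' B A v]
  | neg a iha =>
      obtain ⟨k₁, ρ₁, h1, e1⟩ := iha
      refine ⟨k₁, .neg ρ₁, h1, fun B _ A v => ?_⟩
      show (beval A v a)ᶜ = (beval A v ρ₁)ᶜ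
      rw [e1 B A v]
  | comp a b iha ihb =>
      obtain ⟨k₁, ρ₁, h1, e1⟩ := iha
      obtain ⟨k₂, ρ₂, h2, e2⟩ := ihb
      obtain ⟨ρ₁', h1', e1'⟩ := bcLiftLe (le_max_left k₁ k₂) ρ₁ h1
      obtain ⟨ρ₂', h2', e2'⟩ := bcLiftLe (le_max_right k₁ k₂) ρ₂ h2
      obtain ⟨L₁, hL1, f1⟩ := finalLemma (max k₁ k₂) ρ₁' h1'
      obtain ⟨L₂, hL2, f2⟩ := finalLemma (max k₁ k₂) ρ₂' h2'
      refine ⟨max k₁ k₂ + 1, tsup (L₁.flatMap fun s => L₂.map (RTerm.comp s)), ?_, ?_⟩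
      · refine isBC_tsup fun t ht => ?_
        rcases List.mem_flatMap.mp ht with ⟨s, hs, ht⟩
        rcases List.mem_map.mp ht with ⟨u, hu, rfl⟩
        show RTerm.comp s u ∈ _
        exact List.mem_append.mpr (Or.inr (mem_listC_of_comp (hL1 s hs) (hL2 u hu)))
      · intro B _ A v
        rw [beval_comp_tsup]
        show A.comp (beval A v a) (beval A v b) = _
        rw [e1 B A v, e2 B A v, e1' B A v, e2' B A v, f1 B A v, f2 B A v]
  | conv a iha =>
      obtain ⟨k₁, ρ₁, h1, e1⟩ := iha
      obtain ⟨L, hL, f1⟩ := finalLemma k₁ ρ₁ h1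
      refine ⟨k₁ + 1, tsup (L.map RTerm.conv), ?_, ?_⟩
      · refine isBC_tsup fun t ht => ?_
        rcases List.mem_map.mp ht with ⟨s, hs, rfl⟩
        show RTerm.conv s ∈ _
        exact List.mem_append.mpr (Or.inr (mem_listC_of_conv (hL s hs)))
      · intro B _ A v
        rw [beval_conv_tsup]
        show A.conv (beval A v a) = _
        rw [e1 B A v, f1 B A v]

end NF3c


/-- every relation-type term equals a join of normal forms of some
degree `k`, in every Boolean algebra with operators of relation type. -/
theorem stmt_3 (m : ℕ) (τ : RTerm m) :
    ∃ (k : ℕ) (S : Finset (RTerm m)), (∀ σ ∈ S, σ ∈ forms m k) ∧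
      ∀ (B : Type) [BooleanAlgebra B] (A : RelBAO B) (v : Fin m → B),
        beval A v τ = S.sup (beval A v) := by
  obtain ⟨k, ρ, hbc, he⟩ := mainBC τ
  obtain ⟨L, hL, he2⟩ := finalLemma k ρ hbc
  refine ⟨k, L.toFinset, fun σ hσ => hL σ (List.mem_toFinset.mp hσ), ?_⟩
  intro B _ A v
  rw [he B A v, he2 B A v]
  exact (toFinset_sup_eq _ _).symm
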